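/- If ‖√Σ L √Υ‖ < 1, with Σ, Υ strongly monotone self-adjoint bounded linear and L bounded linear, then V(x,u) = (Υ⁻¹x − L*u, Σ⁻¹u − Lx) is strongly monotone on H ⊕ G; in particular ran V = H × G is closed. -/

import Mathlib

open RealInnerProductSpace

private lemma surj_aux {E : Type*} [NormedAddCommGroup E] [InnerProductSpace ℝ E] [CompleteSpace E]
    (T : E →L[ℝ] E) (c : ℝ) (hc : 0 < c) (hlow : ∀ z, c * ‖z‖ ≤ ‖T z‖)
    (hker : ∀ w : E, (∀ y : E, ⟪T y, w⟫ = 0) → w = 0) : Function.Surjective T := by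
  have hanti : AntilipschitzWith (⟨c, hc.le⟩ : NNReal)⁻¹ T := by
    apply AddMonoidHomClass.antilipschitz_of_bound
    intro x
    have := hlow x
    show ‖x‖ ≤ c⁻¹ * ‖T x‖
    rw [inv_mul_eq_div, le_div_iff₀ hc]
    linarith
  have hclosed : IsClosed (Set.range T) := hanti.isClosed_range T.uniformContinuous
  set K : Submodule ℝ E := LinearMap.range (T : E →ₗ[ℝ] E) with hK
  have hKset : (K : Set E) = Set.range T := LinearMap.coe_range _
  have hKclosed : IsClosed (K : Set E) := hKset ▸ hclosed
  haveI : CompleteSpace K := hKclosed.completeSpace_coe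
  have horth : Kᗮ = ⊥ := by
    rw [Submodule.eq_bot_iff]
    intro w hw
    exact hker w fun y => hw (T y) (LinearMap.mem_range_self _ y)
  have : K = ⊤ := Submodule.orthogonal_eq_bot_iff.mp horth
  exact LinearMap.range_eq_top.mp this

/-- The pair `(x, u)` regarded as an element of the Hilbert direct sum `H ⊕ G`. -/
noncomputable def pd {H G : Type*} (x : H) (u : G) : WithLp 2 (H × G) :=
  (WithLp.equiv 2 (H × G)).symm (x, u)

set_option maxHeartbeats 1000000 in
/-- If `‖√Σ L √Υ‖ < 1`, then `V(x,u) = (Υ⁻¹x − L*u, Σ⁻¹u − Lx)` is strongly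
monotone on `H ⊕ G`; in particular `ran V = H × G` is closed. -/
theorem stmt_18 {H G : Type*} [NormedAddCommGroup H] [InnerProductSpace ℝ H] [CompleteSpace H]
    [NormedAddCommGroup G] [InnerProductSpace ℝ G] [CompleteSpace G]
    (Ups UpsI sUps : H →L[ℝ] H) (Sg SgI sSg : G →L[ℝ] G) (L : H →L[ℝ] G)
    (τ σ : ℝ) (hτ : 0 < τ) (hσ : 0 < σ)
    (hUsa : ∀ x y : H, ⟪Ups x, y⟫ = ⟪x, Ups y⟫)
    (hUsm : ∀ x : H, τ * ‖x‖ ^ 2 ≤ ⟪Ups x, x⟫)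
    (hSsa : ∀ u v : G, ⟪Sg u, v⟫ = ⟪u, Sg v⟫)
    (hSsm : ∀ u : G, σ * ‖u‖ ^ 2 ≤ ⟪Sg u, u⟫)
    (hUinv : Ups.comp UpsI = ContinuousLinearMap.id ℝ H ∧
      UpsI.comp Ups = ContinuousLinearMap.id ℝ H)
    (hSinv : Sg.comp SgI = ContinuousLinearMap.id ℝ G ∧
      SgI.comp Sg = ContinuousLinearMap.id ℝ G)
    (hsU : (∀ x y : H, ⟪sUps x, y⟫ = ⟪x, sUps y⟫) ∧ (∀ x : H, 0 ≤ ⟪sUps x, x⟫) ∧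
      sUps.comp sUps = Ups)
    (hsS : (∀ u v : G, ⟪sSg u, v⟫ = ⟪u, sSg v⟫) ∧ (∀ u : G, 0 ≤ ⟪sSg u, u⟫) ∧
      sSg.comp sSg = Sg)
    (hnorm : ‖sSg.comp (L.comp sUps)‖ < 1)
    (V : WithLp 2 (H × G) →L[ℝ] WithLp 2 (H × G))
    (hV : ∀ (x : H) (u : G),
      V (pd x u) = pd (UpsI x - ContinuousLinearMap.adjoint L u) (SgI u - L x)) :
    (∃ ρ > (0:ℝ), ∀ z : WithLp 2 (H × G), ρ * ‖z‖ ^ 2 ≤ ⟪V z, z⟫) ∧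
    Set.range V = Set.univ ∧ IsClosed (Set.range V) := by
  -- `sUps` is bounded below
  have hUlow : ∀ a : H, Real.sqrt τ * ‖a‖ ≤ ‖sUps a‖ := by
    intro a
    have h1 : τ * ‖a‖ ^ 2 ≤ ‖sUps a‖ ^ 2 := by
      have : ⟪sUps (sUps a), a⟫ = ‖sUps a‖ ^ 2 := by
        rw [hsU.1, real_inner_self_eq_norm_sq]
      calc τ * ‖a‖ ^ 2 ≤ ⟪Ups a, a⟫ := hUsm a
        _ = ⟪sUps (sUps a), a⟫ := by rw [← hsU.2.2]; rfl
        _ = ‖sUps a‖ ^ 2 := this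
    have h2 := Real.sqrt_le_sqrt h1
    rwa [Real.sqrt_mul hτ.le, Real.sqrt_sq (norm_nonneg a), Real.sqrt_sq (norm_nonneg _)] at h2
  have hSlow : ∀ b : G, Real.sqrt σ * ‖b‖ ≤ ‖sSg b‖ := by
    intro b
    have h1 : σ * ‖b‖ ^ 2 ≤ ‖sSg b‖ ^ 2 := by
      have : ⟪sSg (sSg b), b⟫ = ‖sSg b‖ ^ 2 := by
        rw [hsS.1, real_inner_self_eq_norm_sq]
      calc σ * ‖b‖ ^ 2 ≤ ⟪Sg b, b⟫ := hSsm b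
        _ = ⟪sSg (sSg b), b⟫ := by rw [← hsS.2.2]; rfl
        _ = ‖sSg b‖ ^ 2 := this
    have h2 := Real.sqrt_le_sqrt h1
    rwa [Real.sqrt_mul hσ.le, Real.sqrt_sq (norm_nonneg b), Real.sqrt_sq (norm_nonneg _)] at h2
  have hτs : (0:ℝ) < Real.sqrt τ := Real.sqrt_pos.mpr hτ
  have hσs : (0:ℝ) < Real.sqrt σ := Real.sqrt_pos.mpr hσ
  -- `sUps`, `sSg` are surjective
  have hUsurj : Function.Surjective sUps := by
    apply surj_aux sUps (Real.sqrt τ) hτs hUlow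
    intro w hw
    have hw0 : sUps w = 0 := by
      have := hw (sUps w)
      rw [hsU.1] at this
      exact inner_self_eq_zero.mp this
    have := hUlow w
    rw [hw0, norm_zero] at this
    have : ‖w‖ ≤ 0 := by nlinarith
    simpa using le_antisymm this (norm_nonneg w)
  have hSsurj : Function.Surjective sSg := by
    apply surj_aux sSg (Real.sqrt σ) hσs hSlow
    intro w hw
    have hw0 : sSg w = 0 := by
      have := hw (sSg w)
      rw [hsS.1] at this
      exact inner_self_eq_zero.mp this
    have := hSlow w
    rw [hw0, norm_zero] at this
    have : ‖w‖ ≤ 0 := by nlinarith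
    simpa using le_antisymm this (norm_nonneg w)
  have hUinj : Function.Injective sUps := by
    intro a a' h
    have h0 : sUps (a - a') = 0 := by rw [map_sub, h, sub_self]
    have := hUlow (a - a')
    rw [h0, norm_zero] at this
    have : ‖a - a'‖ ≤ 0 := by nlinarith
    have := le_antisymm this (norm_nonneg _)
    rwa [norm_eq_zero, sub_eq_zero] at this
  have hSinj : Function.Injective sSg := by
    intro a a' h
    have h0 : sSg (a - a') = 0 := by rw [map_sub, h, sub_self]
    have := hSlow (a - a')
    rw [h0, norm_zero] at this
    have : ‖a - a'‖ ≤ 0 := by nlinarith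
    have := le_antisymm this (norm_nonneg _)
    rwa [norm_eq_zero, sub_eq_zero] at this
  -- key: sUps ∘ UpsI ∘ sUps = id, sSg ∘ SgI ∘ sSg = id
  have hUid : ∀ a : H, sUps (UpsI (sUps a)) = a := by
    intro a
    apply hUinj
    have h1 : sUps (sUps (UpsI (sUps a))) = Ups (UpsI (sUps a)) := by
      rw [← hsU.2.2]; rfl
    have h2 : Ups (UpsI (sUps a)) = sUps a := by
      have := congrArg (fun T : H →L[ℝ] H => T (sUps a)) hUinv.1
      simpa using this
    rw [h1, h2]
  have hSid : ∀ b : G, sSg (SgI (sSg b)) = b := by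
    intro b
    apply hSinj
    have h1 : sSg (sSg (SgI (sSg b))) = Sg (SgI (sSg b)) := by
      rw [← hsS.2.2]; rfl
    have h2 : Sg (SgI (sSg b)) = sSg b := by
      have := congrArg (fun T : G →L[ℝ] G => T (sSg b)) hSinv.1
      simpa using this
    rw [h1, h2]
  -- constants
  set m : ℝ := ‖sSg.comp (L.comp sUps)‖ with hm
  have hm0 : 0 ≤ m := norm_nonneg _
  set c : ℝ := max ‖sUps‖ ‖sSg‖ with hc
  have hc0 : 0 ≤ c := le_trans (norm_nonneg sUps) (le_max_left _ _)
  set ρ : ℝ := (1 - m) / (c ^ 2 + 1) with hρ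
  have hden : (0:ℝ) < c ^ 2 + 1 := by positivity
  have hρ0 : 0 < ρ := div_pos (by linarith) hden
  have hρden : ρ * (c ^ 2 + 1) = 1 - m := div_mul_cancel₀ _ (ne_of_gt hden)
  -- coercivity
  have hcoer : ∀ z : WithLp 2 (H × G), ρ * ‖z‖ ^ 2 ≤ ⟪V z, z⟫ := by
    intro z
    set x : H := z.ofLp.1 with hx
    set u : G := z.ofLp.2 with hu
    obtain ⟨a, ha⟩ := hUsurj x
    obtain ⟨b, hb⟩ := hSsurj u
    have hzp : pd x u = z := rfl
    have hVz : V z = pd (UpsI x - ContinuousLinearMap.adjoint L u) (SgI u - L x) := by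
      rw [← hzp]; exact hV x u
    have hinner : ⟪V z, z⟫ =
        ⟪UpsI x, x⟫ + ⟪SgI u, u⟫ - 2 * ⟪L x, u⟫ := by
      rw [hVz, WithLp.prod_inner_apply]
      have h1 : (pd (UpsI x - ContinuousLinearMap.adjoint L u) (SgI u - L x)).ofLp.1
          = UpsI x - ContinuousLinearMap.adjoint L u := rfl
      have h2 : (pd (UpsI x - ContinuousLinearMap.adjoint L u) (SgI u - L x)).ofLp.2
          = SgI u - L x := rfl
      rw [h1, h2, ← hx, ← hu, inner_sub_left, inner_sub_left,
        ContinuousLinearMap.adjoint_inner_left, real_inner_comm u (L x)]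
      ring
    -- rewrite the two quadratic terms
    have hq1 : ⟪UpsI x, x⟫ = ‖a‖ ^ 2 := by
      rw [← ha, ← hsU.1, hUid, real_inner_self_eq_norm_sq]
    have hq2 : ⟪SgI u, u⟫ = ‖b‖ ^ 2 := by
      rw [← hb, ← hsS.1, hSid, real_inner_self_eq_norm_sq]
    -- cross term bound
    have hcross : ⟪L x, u⟫ ≤ m * ‖a‖ * ‖b‖ := by
      have h1 : ⟪L x, u⟫ = ⟪(sSg.comp (L.comp sUps)) a, b⟫ := by
        rw [← ha, ← hb]
        simp only [ContinuousLinearMap.coe_comp', Function.comp_apply]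
        rw [hsS.1]
      rw [h1]
      calc ⟪(sSg.comp (L.comp sUps)) a, b⟫ ≤ ‖(sSg.comp (L.comp sUps)) a‖ * ‖b‖ :=
            real_inner_le_norm _ _
        _ ≤ (m * ‖a‖) * ‖b‖ := by
            apply mul_le_mul_of_nonneg_right ((sSg.comp (L.comp sUps)).le_opNorm a)
              (norm_nonneg b)
        _ = m * ‖a‖ * ‖b‖ := by ring
    -- norm bounds
    have hxa : ‖x‖ ≤ c * ‖a‖ := by
      rw [← ha]
      calc ‖sUps a‖ ≤ ‖sUps‖ * ‖a‖ := sUps.le_opNorm a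
        _ ≤ c * ‖a‖ := mul_le_mul_of_nonneg_right (le_max_left _ _) (norm_nonneg a)
    have hub : ‖u‖ ≤ c * ‖b‖ := by
      rw [← hb]
      calc ‖sSg b‖ ≤ ‖sSg‖ * ‖b‖ := sSg.le_opNorm b
        _ ≤ c * ‖b‖ := mul_le_mul_of_nonneg_right (le_max_right _ _) (norm_nonneg b)
    have hznorm : ‖z‖ ^ 2 = ‖x‖ ^ 2 + ‖u‖ ^ 2 := WithLp.prod_norm_sq_eq_of_L2 z
    rw [hinner, hznorm, hq1, hq2]
    have hxn := norm_nonneg x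
    have hun := norm_nonneg u
    have han := norm_nonneg a
    have hbn := norm_nonneg b
    have hsum : ‖x‖ ^ 2 + ‖u‖ ^ 2 ≤ (c ^ 2 + 1) * (‖a‖ ^ 2 + ‖b‖ ^ 2) := by nlinarith
    have hmono : (1 - m) * (‖a‖ ^ 2 + ‖b‖ ^ 2) ≤ ‖a‖ ^ 2 + ‖b‖ ^ 2 - 2 * ⟪L x, u⟫ := by
      nlinarith [sq_nonneg (‖a‖ - ‖b‖)]
    calc ρ * (‖x‖ ^ 2 + ‖u‖ ^ 2) ≤ ρ * ((c ^ 2 + 1) * (‖a‖ ^ 2 + ‖b‖ ^ 2)) :=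
          mul_le_mul_of_nonneg_left hsum hρ0.le
      _ = (1 - m) * (‖a‖ ^ 2 + ‖b‖ ^ 2) := by rw [← mul_assoc, hρden]
      _ ≤ ‖a‖ ^ 2 + ‖b‖ ^ 2 - 2 * ⟪L x, u⟫ := hmono
  refine ⟨⟨ρ, hρ0, hcoer⟩, ?_, ?_⟩
  · -- surjectivity of V
    have hVlow : ∀ z, ρ * ‖z‖ ≤ ‖V z‖ := by
      intro z
      rcases eq_or_ne z 0 with rfl | hz
      · simp
      · have hzpos : 0 < ‖z‖ := norm_pos_iff.mpr hz
        have h1 : ρ * ‖z‖ ^ 2 ≤ ‖V z‖ * ‖z‖ :=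
          le_trans (hcoer z) (real_inner_le_norm _ _)
        have h2 : ρ * ‖z‖ * ‖z‖ ≤ ‖V z‖ * ‖z‖ := by nlinarith
        exact le_of_mul_le_mul_right h2 hzpos
    have hVker : ∀ w, (∀ y, ⟪V y, w⟫ = 0) → w = 0 := by
      intro w hw
      have := hcoer w
      rw [hw w] at this
      have : ‖w‖ ^ 2 ≤ 0 := by nlinarith
      have : ‖w‖ = 0 := by nlinarith [norm_nonneg w, sq_nonneg ‖w‖]
      simpa using this
    have := surj_aux V ρ hρ0 hVlow hVker
    exact Set.range_eq_univ.mpr this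
  · have : ∀ z, ρ * ‖z‖ ≤ ‖V z‖ := by
      intro z
      rcases eq_or_ne z 0 with rfl | hz
      · simp
      · have hzpos : 0 < ‖z‖ := norm_pos_iff.mpr hz
        have h1 : ρ * ‖z‖ ^ 2 ≤ ‖V z‖ * ‖z‖ :=
          le_trans (hcoer z) (real_inner_le_norm _ _)
        have h2 : ρ * ‖z‖ * ‖z‖ ≤ ‖V z‖ * ‖z‖ := by nlinarith
        exact le_of_mul_le_mul_right h2 hzpos
    have hanti : AntilipschitzWith (⟨ρ, hρ0.le⟩ : NNReal)⁻¹ V := by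
      apply AddMonoidHomClass.antilipschitz_of_bound
      intro z
      have := this z
      show ‖z‖ ≤ ρ⁻¹ * ‖V z‖
      rw [inv_mul_eq_div, le_div_iff₀ hρ0]
      linarith
    exact hanti.isClosed_range V.uniformContinuous
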